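/- Let k, r, a, b, m, n be integers with k ≥ 1, 0 ≤ a ≤ m, b ≤ n, kb ≥ max{0, a − kr}, and kn ≥ m − kr. Then the number of monotone lattice paths from (a,b) to (m,n) staying weakly above the line y = x/k − r equals the number of monotone lattice paths from (0, k(n+r)−m) to (n−b, k(n+r)−a) staying weakly above the line y = kx. -/

import Mathlib

open Finset

/-- A monotone lattice path from `s` to `t` using unit steps `(1,0)` and `(0,1)`. -/
def MonoPath (s t : ℤ × ℤ) (P : List (ℤ × ℤ)) : Prop :=
  P.head? = some s ∧ P.getLast? = some t ∧
  P.Chain' (fun p q => q = (p.1 + 1, p.2) ∨ q = (p.1, p.2 + 1))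

/-- Integer binomial coefficient, `0` for negative lower index. -/
def IC (x j : ℤ) : ℕ := if j < 0 then 0 else x.toNat.choose j.toNat

/-- Number of monotone lattice paths from `(a,b)` to `(m,n)` staying weakly above `y = kx - r`. -/
noncomputable def NW (k r a b m n : ℤ) : ℕ :=
  Set.ncard {P : List (ℤ × ℤ) | MonoPath (a, b) (m, n) P ∧ ∀ p ∈ P, k * p.1 - r ≤ p.2}

/-- Number of monotone lattice paths from `(a,b)` to `(m,n)` staying strictly above `y = kx - r`. -/
noncomputable def NS (k r a b m n : ℤ) : ℕ :=
  Set.ncard {P : List (ℤ × ℤ) | MonoPath (a, b) (m, n) P ∧ ∀ p ∈ P, k * p.1 - r < p.2}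

/-- Number of monotone lattice paths from `(a,b)` to `(m,n)` staying weakly above `y = x/k - r`. -/
noncomputable def NWinv (k r a b m n : ℤ) : ℕ :=
  Set.ncard {P : List (ℤ × ℤ) | MonoPath (a, b) (m, n) P ∧ ∀ p ∈ P, p.1 - k * r ≤ k * p.2}

theorem stmt10 (k r a b m n : ℤ) (hk : 1 ≤ k) (ha : 0 ≤ a) (ham : a ≤ m) (hbn : b ≤ n)
    (hb1 : 0 ≤ k * b) (hb2 : a - k * r ≤ k * b) (hn : m - k * r ≤ k * n) :
    NWinv k r a b m n = NW k 0 0 (k * (n + r) - m) (n - b) (k * (n + r) - a) := by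
  classical
  set T : ℤ × ℤ → ℤ × ℤ := fun p => (n - p.2, k * (n + r) - p.1) with hT
  set T' : ℤ × ℤ → ℤ × ℤ := fun q => (k * (n + r) - q.2, n - q.1) with hT'
  have hTT' : ∀ q, T (T' q) = q := by intro q; simp [hT, hT']
  have hTinj : Function.Injective T := by
    intro p q h
    simp only [hT, Prod.mk.injEq] at h
    ext <;> omega
  have hfinj : Function.Injective (fun P : List (ℤ × ℤ) => (P.map T).reverse) := by
    intro P Q h
    simp only [List.reverse_inj] at h
    exact List.map_injective_iff.mpr hTinj h
  have hopt : ∀ (o : Option (ℤ × ℤ)) (x : ℤ × ℤ), o.map T = some (T x) ↔ o = some x := by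
    intro o x; cases o <;> simp [hTinj.eq_iff]
  have hTmn : T (m, n) = (0, k * (n + r) - m) := by simp [hT]
  have hTab : T (a, b) = (n - b, k * (n + r) - a) := by simp [hT]
  have equiv : ∀ P : List (ℤ × ℤ),
      (MonoPath (0, k * (n + r) - m) (n - b, k * (n + r) - a) ((P.map T).reverse) ∧
        ∀ p ∈ (P.map T).reverse, k * p.1 - 0 ≤ p.2) ↔
      (MonoPath (a, b) (m, n) P ∧ ∀ p ∈ P, p.1 - k * r ≤ k * p.2) := by
    intro P
    unfold MonoPath
    rw [List.head?_reverse, List.getLast?_reverse, List.head?_map, List.getLast?_map,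
      List.Chain', List.Chain', List.isChain_reverse, List.isChain_map, ← hTmn, ← hTab, hopt, hopt]
    constructor
    · rintro ⟨⟨h1, h2, h3⟩, h4⟩
      refine ⟨⟨h2, h1, ?_⟩, ?_⟩
      · refine h3.imp ?_
        intro p q h
        simp only [flip, hT, Prod.mk.injEq] at h
        rcases h with ⟨h5, h6⟩ | ⟨h5, h6⟩
        · right; ext <;> simp <;> omega
        · left; ext <;> simp <;> omega
      · intro p hp
        have := h4 (T p) (by simp only [List.mem_reverse, List.mem_map]; exact ⟨p, hp, rfl⟩)
        simp only [hT] at this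
        nlinarith
    · rintro ⟨⟨h1, h2, h3⟩, h4⟩
      refine ⟨⟨h2, h1, ?_⟩, ?_⟩
      · refine h3.imp ?_
        intro p q h
        simp only [flip, hT, Prod.mk.injEq]
        rcases h with h | h
        · right
          rw [Prod.ext_iff] at h
          simp only [] at h
          exact ⟨by omega, by omega⟩
        · left
          rw [Prod.ext_iff] at h
          simp only [] at h
          exact ⟨by omega, by omega⟩
      · intro q hq
        simp only [List.mem_reverse, List.mem_map] at hq
        obtain ⟨p, hp, rfl⟩ := hq
        have := h4 p hp
        simp only [hT]
        nlinarith
  have key : {Q : List (ℤ × ℤ) | MonoPath (0, k * (n + r) - m) (n - b, k * (n + r) - a) Q ∧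
        ∀ p ∈ Q, k * p.1 - 0 ≤ p.2}
      = (fun P : List (ℤ × ℤ) => (P.map T).reverse) ''
        {P : List (ℤ × ℤ) | MonoPath (a, b) (m, n) P ∧ ∀ p ∈ P, p.1 - k * r ≤ k * p.2} := by
    ext Q
    constructor
    · intro hQ
      refine ⟨(Q.reverse.map T'), ?_, ?_⟩
      · have hfg : ((Q.reverse.map T').map T).reverse = Q := by
          rw [List.map_map]
          have : T ∘ T' = id := funext hTT'
          simp [this]
        exact Set.mem_setOf_eq ▸ (equiv _).mp (by rw [hfg]; exact hQ)
      · show ((Q.reverse.map T').map T).reverse = Q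
        rw [List.map_map]
        have : T ∘ T' = id := funext hTT'
        simp [this]
    · rintro ⟨P, hP, rfl⟩
      exact (equiv P).mpr hP
  rw [NWinv, NW, key, Set.ncard_image_of_injective _ hfinj]
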